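/- A subset S ⊆ S² is locally octahedral (i.e., (u·v)(u·w)(v·w) ≥ 0 for all u, v, w ∈ S) if and only if every subset of S of at most 3 elements is octahedral with respect to some regular octahedron. -/

import Mathlib

open scoped RealInnerProductSpace

abbrev E3 := EuclideanSpace ℝ (Fin 3)

/-- extend one or two orthonormal vectors to an orthonormal basis -/
lemma extend2 (a b : E3) (ha : ‖a‖ = 1) (hb : ‖b‖ = 1) (hab : ⟪a, b⟫ = 0) :
    ∃ β : OrthonormalBasis (Fin 3) ℝ E3, β 0 = a ∧ β 1 = b := by
  have hcard : Module.finrank ℝ E3 = Fintype.card (Fin 3) := by simp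
  have hv : Orthonormal ℝ (Set.restrict ({0,1} : Set (Fin 3)) ![a, b, 0]) := by
    constructor
    · rintro ⟨i, hi⟩
      simp only [Set.mem_insert_iff, Set.mem_singleton_iff] at hi
      rcases hi with rfl | rfl <;> simpa
    · rintro ⟨i, hi⟩ ⟨j, hj⟩ hij
      simp only [Set.mem_insert_iff, Set.mem_singleton_iff] at hi hj
      have hij' : i ≠ j := by simpa [Subtype.ext_iff] using hij
      rcases hi with rfl | rfl <;> rcases hj with rfl | rfl <;>
        simp_all [real_inner_comm a b]
      · exact hab
      · exact (real_inner_comm a b).trans hab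
  obtain ⟨β, hβ⟩ := hv.exists_orthonormalBasis_extension_of_card_eq hcard
  exact ⟨β, by simpa using hβ 0 (by simp), by simpa using hβ 1 (by simp)⟩

lemma extend1 (a : E3) (ha : ‖a‖ = 1) :
    ∃ β : OrthonormalBasis (Fin 3) ℝ E3, β 0 = a := by
  have hcard : Module.finrank ℝ E3 = Fintype.card (Fin 3) := by simp
  have hv : Orthonormal ℝ (Set.restrict ({0} : Set (Fin 3)) ![a, 0, 0]) := by
    constructor
    · rintro ⟨i, hi⟩
      simp only [Set.mem_singleton_iff] at hi
      subst hi; simpa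
    · rintro ⟨i, hi⟩ ⟨j, hj⟩ hij
      simp only [Set.mem_singleton_iff] at hi hj
      exact absurd (by simp [Subtype.ext_iff, hi, hj]) hij
  obtain ⟨β, hβ⟩ := hv.exists_orthonormalBasis_extension_of_card_eq hcard
  exact ⟨β, by simpa using hβ 0 (by simp)⟩

lemma inner_self_one (a : E3) (ha : ‖a‖ = 1) : ⟪a, a⟫ = 1 := by
  rw [real_inner_self_eq_norm_sq, ha]; norm_num

lemma eq_of_inner_one (a b : E3) (ha : ‖a‖ = 1) (hb : ‖b‖ = 1) (h : ⟪a, b⟫ = 1) : b = a := by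
  have hc : ⟪b, a⟫ = 1 := by rw [real_inner_comm]; exact h
  have h0 : ⟪b - a, b - a⟫ = 0 := by
    simp only [inner_sub_left, inner_sub_right, inner_self_one a ha, inner_self_one b hb, hc, h]
    ring
  have : b - a = 0 := by exact_mod_cast inner_self_eq_zero.mp h0
  exact sub_eq_zero.mp this

lemma inner_le_one (a b : E3) (ha : ‖a‖ = 1) (hb : ‖b‖ = 1) : ⟪a, b⟫ ≤ 1 := by
  have := real_inner_le_norm a b
  rwa [ha, hb, mul_one] at this

lemma build (a b c : E3) (ha : ‖a‖ = 1) (hb : ‖b‖ = 1) (hne : b ≠ a)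
    (hp : 0 ≤ ⟪a, b⟫) (hq : 0 ≤ ⟪a, c⟫) (hr : ⟪a, b⟫ * ⟪a, c⟫ ≤ ⟪b, c⟫) :
    ∃ u : Fin 3 → E3, Orthonormal ℝ u ∧ ∃ ε : Fin 3 → ℝ, (∀ i, ε i = 1 ∨ ε i = -1) ∧
      (∀ i, 0 ≤ ε i * ⟪a, u i⟫) ∧ (∀ i, 0 ≤ ε i * ⟪b, u i⟫) ∧ (∀ i, 0 ≤ ε i * ⟪c, u i⟫) := by
  set p : ℝ := ⟪a, b⟫ with hpdef
  have hba : ⟪b, a⟫ = p := (real_inner_comm b a).symm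
  have hp1 : p < 1 :=
    lt_of_le_of_ne (inner_le_one a b ha hb) (fun h => hne (eq_of_inner_one a b ha hb h))
  set w : E3 := b - p • a with hwdef
  have haw : ⟪a, w⟫ = 0 := by
    simp only [hwdef, inner_sub_right, real_inner_smul_right, inner_self_one a ha]
    ring
  have hbw : ⟪b, w⟫ = 1 - p ^ 2 := by
    simp only [hwdef, inner_sub_right, real_inner_smul_right, inner_self_one b hb, hba]
    ring
  have hcw : ⟪c, w⟫ = ⟪c, b⟫ - p * ⟪c, a⟫ := by
    simp only [hwdef, inner_sub_right, real_inner_smul_right]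
  have hww : ⟪w, w⟫ = 1 - p ^ 2 := by
    simp only [hwdef, inner_sub_left, inner_sub_right, real_inner_smul_left,
      real_inner_smul_right, inner_self_one a ha, inner_self_one b hb, hba, hpdef]
    ring
  have hp2 : 0 < 1 - p ^ 2 := by nlinarith
  have htsq : ‖w‖ ^ 2 = 1 - p ^ 2 := by rw [← real_inner_self_eq_norm_sq, hww]
  have ht : 0 < ‖w‖ := by nlinarith [norm_nonneg w]
  set b' : E3 := ‖w‖⁻¹ • w with hb'def
  have hb' : ‖b'‖ = 1 := by
    rw [hb'def, norm_smul, Real.norm_eq_abs, abs_inv, abs_of_pos ht, inv_mul_cancel₀ ht.ne']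
  have hab' : ⟪a, b'⟫ = 0 := by rw [hb'def, real_inner_smul_right, haw, mul_zero]
  obtain ⟨β, hβ0, hβ1⟩ := extend2 a b' ha hb' hab'
  have horth := β.orthonormal
  have h02 : ⟪β 0, β 2⟫ = 0 := horth.2 (by decide)
  have h12 : ⟪β 1, β 2⟫ = 0 := horth.2 (by decide)
  have hbdec : b = ‖w‖ • β 1 + p • β 0 := by
    rw [hβ0, hβ1, hb'def, smul_smul, mul_inv_cancel₀ ht.ne', one_smul, hwdef]
    abel
  -- inner products with β 2
  have ha2 : ⟪a, β 2⟫ = 0 := by rw [← hβ0]; exact h02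
  have hb2 : ⟪b, β 2⟫ = 0 := by
    rw [hbdec, inner_add_left, real_inner_smul_left, real_inner_smul_left, h02, h12]
    ring
  -- inner products with β 0, β 1
  have ha0 : ⟪a, β 0⟫ = 1 := by rw [hβ0]; exact inner_self_one a ha
  have ha1 : ⟪a, β 1⟫ = 0 := by rw [hβ1]; exact hab'
  have hb0 : ⟪b, β 0⟫ = p := by rw [hβ0]; exact hba
  have hb1 : 0 ≤ ⟪b, β 1⟫ := by
    rw [hβ1, hb'def, real_inner_smul_right, hbw]
    positivity
  have hc0 : 0 ≤ ⟪c, β 0⟫ := by rw [hβ0, real_inner_comm]; exact hq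
  have hc1 : 0 ≤ ⟪c, β 1⟫ := by
    rw [hβ1, hb'def, real_inner_smul_right, hcw]
    have h1 : ⟪c, b⟫ = ⟪b, c⟫ := real_inner_comm b c
    have h2 : ⟪c, a⟫ = ⟪a, c⟫ := real_inner_comm a c
    rw [h1, h2]
    have : 0 ≤ ⟪b, c⟫ - p * ⟪a, c⟫ := by linarith
    positivity
  have hfin : ∀ i : Fin 3, i = 0 ∨ i = 1 ∨ i = 2 := by decide
  refine ⟨⇑β, horth, fun i => if 0 ≤ ⟪c, β i⟫ then 1 else -1, ?_, ?_, ?_, ?_⟩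
  · intro i
    beta_reduce
    split_ifs
    · exact Or.inl rfl
    · exact Or.inr rfl
  · intro i
    beta_reduce
    rcases hfin i with rfl | rfl | rfl
    · rw [if_pos hc0, ha0]; norm_num
    · rw [if_pos hc1, ha1]; norm_num
    · rw [ha2, mul_zero]
  · intro i
    beta_reduce
    rcases hfin i with rfl | rfl | rfl
    · rw [if_pos hc0, hb0, one_mul]; exact hp
    · rw [if_pos hc1, one_mul]; exact hb1
    · rw [hb2, mul_zero]
  · intro i
    beta_reduce
    by_cases h : 0 ≤ ⟪c, β i⟫
    · rw [if_pos h, one_mul]; exact h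
    · rw [if_neg h]; push_neg at h; nlinarith

/-- A set is octahedral with respect to some regular octahedron, given by an
orthonormal basis together with signs, if all its points lie (coherently) in a
pair of opposite closed orthants. -/
def Octahedral (S : Set (EuclideanSpace ℝ (Fin 3))) : Prop :=
  ∃ u : Fin 3 → EuclideanSpace ℝ (Fin 3), Orthonormal ℝ u ∧
    ∃ ε : Fin 3 → ℝ, (∀ i, ε i = 1 ∨ ε i = -1) ∧
      ∀ x ∈ S, (∀ i, 0 ≤ ε i * (inner ℝ x (u i) : ℝ)) ∨ (∀ i, ε i * (inner ℝ x (u i) : ℝ) ≤ 0)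

lemma main3 (a b c : E3) (ha : ‖a‖ = 1) (hb : ‖b‖ = 1) (hc : ‖c‖ = 1)
    (hp : 0 ≤ ⟪a, b⟫) (hq : 0 ≤ ⟪a, c⟫) (hr : ⟪a, b⟫ * ⟪a, c⟫ ≤ ⟪b, c⟫) :
    ∃ u : Fin 3 → E3, Orthonormal ℝ u ∧ ∃ ε : Fin 3 → ℝ, (∀ i, ε i = 1 ∨ ε i = -1) ∧
      (∀ i, 0 ≤ ε i * ⟪a, u i⟫) ∧ (∀ i, 0 ≤ ε i * ⟪b, u i⟫) ∧ (∀ i, 0 ≤ ε i * ⟪c, u i⟫) := by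
  by_cases hne : b = a
  · subst hne
    by_cases hca : c = b
    · subst hca
      obtain ⟨β, hβ0⟩ := extend1 c ha
      have horth := β.orthonormal
      have hfin : ∀ i : Fin 3, i = 0 ∨ i = 1 ∨ i = 2 := by decide
      have key : ∀ i, 0 ≤ (1 : ℝ) * ⟪c, β i⟫ := by
        intro i
        rcases hfin i with rfl | rfl | rfl
        · rw [hβ0, one_mul, inner_self_one c ha]; norm_num
        · rw [← hβ0, one_mul, horth.2 (show (0:Fin 3) ≠ 1 by decide)]
        · rw [← hβ0, one_mul, horth.2 (show (0:Fin 3) ≠ 2 by decide)]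
      exact ⟨⇑β, horth, fun _ => 1, fun _ => Or.inl rfl, key, key, key⟩
    · obtain ⟨u, hu, ε, hε, F1, F2, F3⟩ :=
        build b c c ha hc hca hq hq
          (by nlinarith [inner_le_one b c ha hc, inner_self_one c hc])
      exact ⟨u, hu, ε, hε, F1, F1, F2⟩
  · exact build a b c ha hb hne hp hq hr

noncomputable def sgn (p : ℝ) : ℝ := if 0 ≤ p then 1 else -1
lemma sgn_pm (p : ℝ) : sgn p = 1 ∨ sgn p = -1 := by
  unfold sgn; split_ifs <;> simp
lemma sgn_mul_nonneg (p : ℝ) : 0 ≤ sgn p * p := by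
  unfold sgn; split_ifs with h
  · linarith
  · push_neg at h; nlinarith
lemma sgn_mul_pos (p : ℝ) (hp : p ≠ 0) : 0 < sgn p * p := by
  refine lt_of_le_of_ne (sgn_mul_nonneg p) fun h => hp ?_
  rcases sgn_pm p with h1 | h1 <;> rw [h1] at h <;> linarith

lemma signs (p q r : ℝ) (h : 0 ≤ p * q * r) :
    ∃ s t : ℝ, (s = 1 ∨ s = -1) ∧ (t = 1 ∨ t = -1) ∧
      0 ≤ s * p ∧ 0 ≤ t * q ∧ 0 ≤ s * t * r := by
  rcases eq_or_ne r 0 with hr | hr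
  · exact ⟨sgn p, sgn q, sgn_pm _, sgn_pm _, sgn_mul_nonneg _, sgn_mul_nonneg _,
      by rw [hr, mul_zero]⟩
  rcases eq_or_ne p 0 with hp | hp
  · refine ⟨sgn (sgn q * r), sgn q, sgn_pm _, sgn_pm _, by rw [hp, mul_zero], sgn_mul_nonneg _, ?_⟩
    have := sgn_mul_nonneg (sgn q * r)
    calc (0:ℝ) ≤ sgn (sgn q * r) * (sgn q * r) := this
      _ = sgn (sgn q * r) * sgn q * r := by ring
  rcases eq_or_ne q 0 with hq | hq
  · refine ⟨sgn p, sgn (sgn p * r), sgn_pm _, sgn_pm _, sgn_mul_nonneg _, by rw [hq, mul_zero], ?_⟩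
    have := sgn_mul_nonneg (sgn p * r)
    calc (0:ℝ) ≤ sgn (sgn p * r) * (sgn p * r) := this
      _ = sgn p * sgn (sgn p * r) * r := by ring
  · refine ⟨sgn p, sgn q, sgn_pm _, sgn_pm _, sgn_mul_nonneg _, sgn_mul_nonneg _, ?_⟩
    have hsp := sgn_mul_pos p hp
    have htq := sgn_mul_pos q hq
    have hs2 : sgn p * sgn p = 1 := by rcases sgn_pm p with h1 | h1 <;> rw [h1] <;> norm_num
    have ht2 : sgn q * sgn q = 1 := by rcases sgn_pm q with h1 | h1 <;> rw [h1] <;> norm_num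
    by_contra hneg
    push_neg at hneg
    have hkey : (sgn p * p) * (sgn q * q) * (sgn p * sgn q * r)
        = (sgn p * sgn p) * (sgn q * sgn q) * (p * q * r) := by ring
    rw [hs2, ht2, one_mul, one_mul] at hkey
    have := mul_neg_of_pos_of_neg (mul_pos hsp htq) hneg
    rw [hkey] at this
    linarith

lemma oct_of_triple (a b c : E3) (ha : ‖a‖ = 1) (hb : ‖b‖ = 1) (hc : ‖c‖ = 1)
    (H : 0 ≤ ⟪a, b⟫ * ⟪a, c⟫ * ⟪b, c⟫) : Octahedral {a, b, c} := by
  obtain ⟨s, t, hs, ht, hsp, htq, hstr⟩ := signs ⟪a, b⟫ ⟪a, c⟫ ⟪b, c⟫ H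
  have hs1 : |s| = 1 := by rcases hs with h | h <;> rw [h] <;> norm_num
  have ht1 : |t| = 1 := by rcases ht with h | h <;> rw [h] <;> norm_num
  have hs2 : s * s = 1 := by rcases hs with h | h <;> rw [h] <;> norm_num
  have ht2 : t * t = 1 := by rcases ht with h | h <;> rw [h] <;> norm_num
  obtain ⟨b1, hb1def⟩ : ∃ y : E3, y = s • b := ⟨_, rfl⟩
  obtain ⟨c1, hc1def⟩ : ∃ y : E3, y = t • c := ⟨_, rfl⟩
  have hb1 : ‖b1‖ = 1 := by rw [hb1def, norm_smul, Real.norm_eq_abs, hs1, hb, mul_one]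
  have hc1 : ‖c1‖ = 1 := by rw [hc1def, norm_smul, Real.norm_eq_abs, ht1, hc, mul_one]
  have hab1 : ⟪a, b1⟫ = s * ⟪a, b⟫ := by rw [hb1def]; exact real_inner_smul_right a b s
  have hac1 : ⟪a, c1⟫ = t * ⟪a, c⟫ := by rw [hc1def]; exact real_inner_smul_right a c t
  have hbc1 : ⟪b1, c1⟫ = s * t * ⟪b, c⟫ := by
    rw [hb1def, hc1def, real_inner_smul_left, real_inner_smul_right]; ring
  have hp' : 0 ≤ ⟪a, b1⟫ := by rw [hab1]; exact hsp
  have hq' : 0 ≤ ⟪a, c1⟫ := by rw [hac1]; exact htq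
  have hr' : 0 ≤ ⟪b1, c1⟫ := by rw [hbc1]; exact hstr
  have hple : ⟪a, b1⟫ ≤ 1 := inner_le_one a b1 ha hb1
  have hqle : ⟪a, c1⟫ ≤ 1 := inner_le_one a c1 ha hc1
  have hrle : ⟪b1, c1⟫ ≤ 1 := inner_le_one b1 c1 hb1 hc1
  have htri : ⟪a, b1⟫ * ⟪a, c1⟫ ≤ ⟪b1, c1⟫ ∨ ⟪a, b1⟫ * ⟪b1, c1⟫ ≤ ⟪a, c1⟫ ∨
      ⟪a, c1⟫ * ⟪b1, c1⟫ ≤ ⟪a, b1⟫ := by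
    by_contra hcon
    push_neg at hcon
    obtain ⟨h1, h2, h3⟩ := hcon
    have hp0 : 0 < ⟪a, b1⟫ := by nlinarith
    have hq0 : 0 < ⟪a, c1⟫ := by nlinarith
    have hr0 : 0 < ⟪b1, c1⟫ := by nlinarith
    nlinarith [mul_pos hq0 hr0, mul_pos hp0 hq0, mul_pos hp0 hr0]
  obtain ⟨u, hu, ε, hε, Fa, Fb1, Fc1⟩ :
      ∃ u : Fin 3 → E3, Orthonormal ℝ u ∧ ∃ ε : Fin 3 → ℝ, (∀ i, ε i = 1 ∨ ε i = -1) ∧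
        (∀ i, 0 ≤ ε i * ⟪a, u i⟫) ∧ (∀ i, 0 ≤ ε i * ⟪b1, u i⟫) ∧
        (∀ i, 0 ≤ ε i * ⟪c1, u i⟫) := by
    rcases htri with h1 | h2 | h3
    · exact main3 a b1 c1 ha hb1 hc1 hp' hq' h1
    · obtain ⟨u, hu, ε, hε, F1, F2, F3⟩ := main3 b1 a c1 hb1 ha hc1
        (by rw [real_inner_comm]; exact hp') hr'
        (by rw [real_inner_comm a b1]; exact h2)
      exact ⟨u, hu, ε, hε, F2, F1, F3⟩
    · obtain ⟨u, hu, ε, hε, F1, F2, F3⟩ := main3 c1 a b1 hc1 ha hb1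
        (by rw [real_inner_comm]; exact hq') (by rw [real_inner_comm]; exact hr')
        (by rw [real_inner_comm a c1, real_inner_comm b1 c1]; exact h3)
      exact ⟨u, hu, ε, hε, F2, F3, F1⟩
  have hbb : ∀ i : Fin 3, ⟪b, u i⟫ = s * ⟪b1, u i⟫ := by
    intro i
    rw [hb1def, real_inner_smul_left, ← mul_assoc, hs2, one_mul]
  have hcc : ∀ i : Fin 3, ⟪c, u i⟫ = t * ⟪c1, u i⟫ := by
    intro i
    rw [hc1def, real_inner_smul_left, ← mul_assoc, ht2, one_mul]
  refine ⟨u, hu, ε, hε, ?_⟩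
  rintro x (rfl | rfl | rfl)
  · exact Or.inl Fa
  · rcases hs with h | h
    · refine Or.inl fun i => ?_
      rw [hbb i, h, one_mul]; exact Fb1 i
    · refine Or.inr fun i => ?_
      rw [hbb i, h]
      linarith [Fb1 i]
  · rcases ht with h | h
    · refine Or.inl fun i => ?_
      rw [hcc i, h, one_mul]; exact Fc1 i
    · refine Or.inr fun i => ?_
      rw [hcc i, h]
      linarith [Fc1 i]

lemma inner_expand (u : Fin 3 → E3) (hu : Orthonormal ℝ u) (x y : E3) :
    ⟪x, y⟫ = ∑ i, ⟪x, u i⟫ * ⟪y, u i⟫ := by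
  have hcard : Module.finrank ℝ E3 = Fintype.card (Fin 3) := by simp
  have hres : Orthonormal ℝ (Set.restrict (Set.univ : Set (Fin 3)) u) :=
    hu.comp Subtype.val Subtype.val_injective
  obtain ⟨β, hβ⟩ := hres.exists_orthonormalBasis_extension_of_card_eq hcard
  have hβ' : ∀ i, β i = u i := fun i => hβ i (Set.mem_univ i)
  rw [← β.sum_inner_mul_inner x y]
  refine Finset.sum_congr rfl fun i _ => ?_
  rw [hβ' i, real_inner_comm (u i) y]

lemma cover3 {α : Type*} (s : Set α) (hfin : s.Finite) (h : s.ncard ≤ 3) (hne : s.Nonempty) :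
    ∃ a ∈ s, ∃ b ∈ s, ∃ c ∈ s, s ⊆ {a, b, c} := by
  have h1 : 0 < s.ncard := (Set.ncard_pos hfin).mpr hne
  have : s.ncard = 1 ∨ s.ncard = 2 ∨ s.ncard = 3 := by omega
  rcases this with h' | h' | h'
  · obtain ⟨a, rfl⟩ := Set.ncard_eq_one.mp h'
    exact ⟨a, rfl, a, rfl, a, rfl, by intro x hx; simp_all⟩
  · obtain ⟨a, b, -, rfl⟩ := Set.ncard_eq_two.mp h'
    exact ⟨a, by simp, b, by simp, b, by simp, by intro x hx; simp_all⟩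
  · obtain ⟨a, b, c, -, -, -, rfl⟩ := Set.ncard_eq_three.mp h'
    exact ⟨a, by simp, b, by simp, c, by simp, subset_rfl⟩

lemma oct_mono {S T : Set E3} (hST : S ⊆ T) (h : Octahedral T) : Octahedral S := by
  obtain ⟨u, hu, ε, hε, hmem⟩ := h
  exact ⟨u, hu, ε, hε, fun x hx => hmem x (hST hx)⟩

theorem stmt_9 (S : Set (EuclideanSpace ℝ (Fin 3)))
    (hS : S ⊆ {x : EuclideanSpace ℝ (Fin 3) | ‖x‖ = 1}) :
    (∀ u ∈ S, ∀ v ∈ S, ∀ w ∈ S, (inner ℝ u v : ℝ) * (inner ℝ u w : ℝ) * (inner ℝ v w : ℝ) ≥ 0) ↔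
    (∀ S' ⊆ S, S'.Finite → S'.ncard ≤ 3 → Octahedral S') := by
  constructor
  · intro H S' hsub hfin hcard
    rcases S'.eq_empty_or_nonempty with rfl | hne
    · refine ⟨⇑(EuclideanSpace.basisFun (Fin 3) ℝ),
        (EuclideanSpace.basisFun (Fin 3) ℝ).orthonormal, fun _ => 1, fun _ => Or.inl rfl, ?_⟩
      rintro x ⟨⟩
    · obtain ⟨a, haS, b, hbS, c, hcS, hcov⟩ := cover3 S' hfin hcard hne
      refine oct_mono hcov (oct_of_triple a b c (hS (hsub haS)) (hS (hsub hbS)) (hS (hsub hcS)) ?_)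
      exact H a (hsub haS) b (hsub hbS) c (hsub hcS)
  · intro H a ha b hb c hc
    have hsub : ({a, b, c} : Set E3) ⊆ S := by
      rintro x (rfl | rfl | rfl) <;> assumption
    have hcard : ({a, b, c} : Set E3).ncard ≤ 3 := by
      refine le_trans (Set.ncard_insert_le _ _) ?_
      have := Set.ncard_insert_le b ({c} : Set E3)
      simp only [Set.ncard_singleton] at this
      omega
    obtain ⟨u, hu, ε, hε, hmem⟩ := H {a, b, c} hsub (Set.toFinite _) hcard
    have hε2 : ∀ i, ε i * ε i = 1 := by
      intro i; rcases hε i with h | h <;> rw [h] <;> norm_num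
    have getsign : ∀ x : E3, ((∀ i, 0 ≤ ε i * ⟪x, u i⟫) ∨ (∀ i, ε i * ⟪x, u i⟫ ≤ 0)) →
        ∃ s : ℝ, s * s = 1 ∧ ∀ i, 0 ≤ s * (ε i * ⟪x, u i⟫) := by
      intro x hx
      rcases hx with h | h
      · exact ⟨1, by norm_num, fun i => by rw [one_mul]; exact h i⟩
      · exact ⟨-1, by norm_num, fun i => by linarith [h i]⟩
    obtain ⟨sa, hsa2, hsa⟩ := getsign a (hmem a (by simp))
    obtain ⟨sb, hsb2, hsb⟩ := getsign b (hmem b (by simp))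
    obtain ⟨sc, hsc2, hsc⟩ := getsign c (hmem c (by simp))
    have pairkey : ∀ (x y : E3) (sx sy : ℝ), (∀ i, 0 ≤ sx * (ε i * ⟪x, u i⟫)) →
        (∀ i, 0 ≤ sy * (ε i * ⟪y, u i⟫)) → 0 ≤ sx * sy * ⟪x, y⟫ := by
      intro x y sx sy hx hy
      rw [inner_expand u hu x y, Finset.mul_sum]
      refine Finset.sum_nonneg fun i _ => ?_
      have hprod := mul_nonneg (hx i) (hy i)
      have heq : (sx * (ε i * ⟪x, u i⟫)) * (sy * (ε i * ⟪y, u i⟫))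
          = (ε i * ε i) * (sx * sy * (⟪x, u i⟫ * ⟪y, u i⟫)) := by ring
      rw [hε2 i, one_mul] at heq
      rw [heq] at hprod
      exact hprod
    have P1 := pairkey a b sa sb hsa hsb
    have P2 := pairkey a c sa sc hsa hsc
    have P3 := pairkey b c sb sc hsb hsc
    have key : (⟪a, b⟫ * ⟪a, c⟫ * ⟪b, c⟫ : ℝ)
        = (sa * sb * ⟪a, b⟫) * (sa * sc * ⟪a, c⟫) * (sb * sc * ⟪b, c⟫) := by
      calc (⟪a, b⟫ * ⟪a, c⟫ * ⟪b, c⟫ : ℝ)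
          = ((sa * sa) * (sb * sb) * (sc * sc)) * (⟪a, b⟫ * ⟪a, c⟫ * ⟪b, c⟫) := by
            rw [hsa2, hsb2, hsc2]; ring
        _ = (sa * sb * ⟪a, b⟫) * (sa * sc * ⟪a, c⟫) * (sb * sc * ⟪b, c⟫) := by ring
    rw [ge_iff_le, key]
    exact mul_nonneg (mul_nonneg P1 P2) P3
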